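/- Let Y ⊂ T⁴ = T² × T² be closed, invariant under the diagonal action of SL₂(Z), and suppose Y contains infinitely many distinct two-dimensional invariant subtori, each of the form {(z_h, z_v) : a z_h + b z_v ≡ 0 mod Z²} for integers a, b not both zero. Then Y = T⁴. -/

import Mathlib

/-- The standard linear action of an integer matrix `[[e,f],[g,h]]` on the torus
`ℝ²/ℤ²`, modelled as `AddCircle 1 × AddCircle 1`. -/
noncomputable def torusLin (e f g h : ℤ) (v : AddCircle (1 : ℝ) × AddCircle (1 : ℝ)) :
    AddCircle (1 : ℝ) × AddCircle (1 : ℝ) :=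
  (e • v.1 + f • v.2, g • v.1 + h • v.2)

/-- Given `b ≠ 0` and targets `x, y` on the circle, there is `y'` with `b • y' = x`
within distance `1/|b|` of `y`. -/
lemma solve_near (b : ℤ) (hb : b ≠ 0) (x y : AddCircle (1 : ℝ)) :
    ∃ y' : AddCircle (1 : ℝ), b • y' = x ∧ dist y y' ≤ 1 / |(b : ℝ)| := by
  obtain ⟨r₀, hr₀⟩ := QuotientAddGroup.mk_surjective (x - b • y)
  set r : ℝ := Int.fract r₀ with hr
  have hrnn : 0 ≤ r := Int.fract_nonneg r₀
  have hrlt : r ≤ 1 := le_of_lt (Int.fract_lt_one r₀)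
  have hz : ∀ n : ℤ, (((n : ℝ)) : AddCircle (1 : ℝ)) = 0 := by intro n; simp
  have hrb : ((r : ℝ) : AddCircle (1 : ℝ)) = x - b • y := by
    rw [← hr₀, hr, Int.fract]
    have : ((r₀ - ⌊r₀⌋ : ℝ) : AddCircle (1 : ℝ))
        = ((r₀ : ℝ) : AddCircle (1 : ℝ)) - ((((⌊r₀⌋ : ℝ)) : ℝ) : AddCircle (1 : ℝ)) := by
      push_cast [QuotientAddGroup.mk_sub]; rfl
    rw [this, hz, sub_zero]
  have hbR : (b : ℝ) ≠ 0 := Int.cast_ne_zero.mpr hb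
  refine ⟨y + ((r / b : ℝ) : AddCircle (1 : ℝ)), ?_, ?_⟩
  · rw [smul_add, ← AddCircle.coe_zsmul]
    have h2 : (b • (r / b) : ℝ) = r := by rw [zsmul_eq_mul]; field_simp
    rw [h2, hrb]; abel
  · rw [dist_self_add_right]
    calc ‖((r / b : ℝ) : AddCircle (1 : ℝ))‖ ≤ |r / b| := QuotientAddGroup.norm_mk_le_norm
      _ ≤ 1 / |(b : ℝ)| := by
          rw [abs_div]; gcongr; rwa [abs_of_nonneg hrnn]

/-- If `Y ⊆ T⁴` is closed, invariant under the diagonal `SL₂(ℤ)` action, and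
contains infinitely many distinct invariant subtori of the form
`{(z_h,z_v) : a z_h + b z_v ≡ 0}`, then `Y = T⁴`. -/
theorem stmt8
    (Y : Set ((AddCircle (1 : ℝ) × AddCircle (1 : ℝ)) ×
              (AddCircle (1 : ℝ) × AddCircle (1 : ℝ))))
    (hclosed : IsClosed Y)
    (hinv : ∀ e f g h : ℤ, e * h - f * g = 1 →
      ∀ p ∈ Y, ((torusLin e f g h p.1, torusLin e f g h p.2)) ∈ Y)
    (htori : {S : Set ((AddCircle (1 : ℝ) × AddCircle (1 : ℝ)) ×
                       (AddCircle (1 : ℝ) × AddCircle (1 : ℝ))) |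
        S ⊆ Y ∧ ∃ a b : ℤ, ¬ (a = 0 ∧ b = 0) ∧
          S = {p | a • p.1 + b • p.2 = 0}}.Infinite) :
    Y = Set.univ := by
  have hdense : Dense Y := by
    rw [Metric.dense_iff]
    intro p ε hε
    obtain ⟨n, hn⟩ := exists_nat_gt (1 / ε)
    have hεpos : 0 < 1 / ε := by positivity
    have hnpos : (0 : ℝ) < n := lt_trans hεpos hn
    -- find a torus with a large coefficient
    have hfin : (Set.Finite ((fun ab : ℤ × ℤ =>
        {q : (AddCircle (1 : ℝ) × AddCircle (1 : ℝ)) ×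
             (AddCircle (1 : ℝ) × AddCircle (1 : ℝ)) | ab.1 • q.1 + ab.2 • q.2 = 0}) ''
        (Set.Icc (-(n : ℤ)) n ×ˢ Set.Icc (-(n : ℤ)) n))) :=
      (((Set.finite_Icc _ _).prod (Set.finite_Icc _ _)).image _)
    obtain ⟨S, hS⟩ := (htori.diff hfin).nonempty
    obtain ⟨⟨hSY, a, b, hab, hSeq⟩, hSnot⟩ := hS
    have hbig : (n : ℤ) < |a| ∨ (n : ℤ) < |b| := by
      by_contra hcon
      push_neg at hcon
      exact hSnot ⟨(a, b), ⟨⟨neg_le_of_abs_le hcon.1, le_of_abs_le hcon.1⟩,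
        ⟨neg_le_of_abs_le hcon.2, le_of_abs_le hcon.2⟩⟩, hSeq.symm⟩
    have key : ∀ c : ℤ, (n : ℤ) < |c| → 1 / |(c : ℝ)| < ε := by
      intro c hc
      have h1 : (n : ℝ) < |(c : ℝ)| := by exact_mod_cast (by exact_mod_cast hc : (n : ℝ) < (|c| : ℤ))
      have h2 : (1 : ℝ) / ε < |(c : ℝ)| := lt_trans hn h1
      have hcpos : (0 : ℝ) < |(c : ℝ)| := lt_trans hnpos h1
      rw [one_div_lt hcpos hε]
      exact h2
    rcases hbig with hb' | hb'
    · -- |a| large: solve for the first factor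
      have ha0 : a ≠ 0 := by
        intro h; rw [h] at hb'; simp at hb'; omega
      obtain ⟨x₁, hx₁, hd₁⟩ := solve_near a ha0 (-(b • p.2.1)) p.1.1
      obtain ⟨x₂, hx₂, hd₂⟩ := solve_near a ha0 (-(b • p.2.2)) p.1.2
      refine ⟨((x₁, x₂), p.2), Set.mem_inter ?_ (hSY ?_)⟩
      · rw [Metric.mem_ball]
        have hlt := key a hb'
        simp only [Prod.dist_eq, dist_self, max_self]
        apply max_lt (max_lt _ _) (by simpa using hε)
        · exact lt_of_le_of_lt (by rwa [dist_comm]) hlt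
        · exact lt_of_le_of_lt (by rwa [dist_comm]) hlt
      · rw [hSeq]
        show a • ((x₁, x₂) : AddCircle (1:ℝ) × AddCircle (1:ℝ)) + b • p.2 = 0
        have : a • ((x₁, x₂) : AddCircle (1:ℝ) × AddCircle (1:ℝ)) = (a • x₁, a • x₂) := rfl
        rw [this, hx₁, hx₂]
        ext <;> simp [Prod.fst_add, Prod.snd_add]
    · -- |b| large: solve for the second factor
      have hb0 : b ≠ 0 := by
        intro h; rw [h] at hb'; simp at hb'; omega
      obtain ⟨y₁, hy₁, hd₁⟩ := solve_near b hb0 (-(a • p.1.1)) p.2.1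
      obtain ⟨y₂, hy₂, hd₂⟩ := solve_near b hb0 (-(a • p.1.2)) p.2.2
      refine ⟨(p.1, (y₁, y₂)), Set.mem_inter ?_ (hSY ?_)⟩
      · rw [Metric.mem_ball]
        have hlt := key b hb'
        simp only [Prod.dist_eq, dist_self, max_self]
        apply max_lt (by simpa using hε) (max_lt _ _)
        · exact lt_of_le_of_lt (by rwa [dist_comm]) hlt
        · exact lt_of_le_of_lt (by rwa [dist_comm]) hlt
      · rw [hSeq]
        show a • p.1 + b • ((y₁, y₂) : AddCircle (1:ℝ) × AddCircle (1:ℝ)) = 0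
        have : b • ((y₁, y₂) : AddCircle (1:ℝ) × AddCircle (1:ℝ)) = (b • y₁, b • y₂) := rfl
        rw [this, hy₁, hy₂]
        ext <;> simp [Prod.fst_add, Prod.snd_add]
  rw [← hclosed.closure_eq, hdense.closure_eq]
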